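/- Let a state be reachable if it is obtained from an initial basis configuration |H;t⟩ (a single definite configuration, t a λ_q term) by a finite sequence of steps of the operational model of λ_q. Then any two configurations in the support of a reachable state are congruent: their history tracks have the same length, and corresponding entries (and the computational registers) coincide symbol by symbol except possibly at positions containing the constants 0 or 1. -/
import Mathlib


namespace LambdaQ

/-- Constants of the quantum lambda calculus: bits, gate symbols, placeholder. -/
inductive Const where
  | zero | one | hadamard | phaseS | gateR | cnot | gateX | gateY | gateZ | placeholder
  deriving DecidableEq

/-- Terms of the quantum lambda calculus λ_q. -/
inductive Term where
  | var (x : ℕ)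
  | lam (x : ℕ) (body : Term)
  | app (t₁ t₂ : Term)
  | const (c : Const)
  | bang (t : Term)
  | lamBang (x : ℕ) (body : Term)
  deriving DecidableEq

open Term

/-- The placeholder symbol ⊥. -/
def ph : Term := const .placeholder

def freeVars : Term → Finset ℕ
  | var x => {x}
  | lam x b => freeVars b \ {x}
  | app a b => freeVars a ∪ freeVars b
  | const _ => ∅
  | bang t => freeVars t
  | lamBang x b => freeVars b \ {x}

def allVars : Term → Finset ℕ
  | var x => {x}
  | lam x b => insert x (allVars b)
  | app a b => allVars a ∪ allVars b
  | const _ => ∅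
  | bang t => allVars t
  | lamBang x b => insert x (allVars b)

/-- Naive renaming of free occurrences of `y` by `z`. -/
def rename (y z : ℕ) : Term → Term
  | var x => if x = y then var z else var x
  | lam x b => if x = y then lam x b else lam x (rename y z b)
  | app a b => app (rename y z a) (rename y z b)
  | const c => const c
  | bang t => bang (rename y z t)
  | lamBang x b => if x = y then lamBang x b else lamBang x (rename y z b)

def size : Term → ℕ
  | var _ => 1
  | lam _ b => size b + 1
  | app a b => size a + size b + 1
  | const _ => 1
  | bang t => size t + 1
  | lamBang _ b => size b + 1

theorem size_rename (y z : ℕ) : ∀ t, size (rename y z t) = size t := by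
  intro t
  induction t with
  | var x => simp only [rename]; split <;> rfl
  | lam x b ih => simp only [rename]; split <;> simp [size, ih]
  | app a b iha ihb => simp [rename, size, iha, ihb]
  | const c => rfl
  | bang t ih => simp [rename, size, ih]
  | lamBang x b ih => simp only [rename]; split <;> simp [size, ih]

/-- A variable not occurring in the finite set `s`. -/
def fresh (s : Finset ℕ) : ℕ := (s.sup id) + 1

/-- Capture-avoiding substitution `subst v x t = t[v/x]`. -/
def subst (v : Term) (x : ℕ) : Term → Term
  | var y => if y = x then v else var y
  | const c => const c
  | app a b => app (subst v x a) (subst v x b)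
  | bang t => bang (subst v x t)
  | lam y b =>
      if y = x then lam y b
      else if y ∈ freeVars v ∧ x ∈ freeVars b then
        lam (fresh (allVars b ∪ freeVars v ∪ {x}))
          (subst v x (rename y (fresh (allVars b ∪ freeVars v ∪ {x})) b))
      else lam y (subst v x b)
  | lamBang y b =>
      if y = x then lamBang y b
      else if y ∈ freeVars v ∧ x ∈ freeVars b then
        lamBang (fresh (allVars b ∪ freeVars v ∪ {x}))
          (subst v x (rename y (fresh (allVars b ∪ freeVars v ∪ {x})) b))
      else lamBang y (subst v x b)
  termination_by t => size t
  decreasing_by all_goals (simp [size, size_rename]; try omega)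

/-- Values of λ_q: variables, constants, abstractions, !-suspensions. -/
def IsValue : Term → Prop
  | var _ => True
  | const _ => True
  | lam _ _ => True
  | lamBang _ _ => True
  | bang _ => True
  | app _ _ => False

/-- The skeleton Ē_x: replace every maximal subterm not containing x free
by the placeholder ⊥, keeping x. -/
def skel (x : ℕ) : Term → Term
  | var y => if y = x then var y else ph
  | lam y b => if y ≠ x ∧ x ∈ freeVars b then lam y (skel x b) else ph
  | lamBang y b => if y ≠ x ∧ x ∈ freeVars b then lamBang y (skel x b) else ph
  | app a b => if x ∈ freeVars a ∪ freeVars b then app (skel x a) (skel x b) else ph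
  | bang t => if x ∈ freeVars t then bang (skel x t) else ph
  | const _ => ph

/-- Scott-encoded empty list  nil ≡ λ!x.λ!y.(x id). -/
def idT : Term := lam 20 (var 20)
def nilT : Term := lamBang 0 (lamBang 1 (app (var 0) idT))
/-- cons ≡ λh.λt.λ!x.λ!y.((y h) t). -/
def consT : Term := lam 2 (lam 3 (lamBang 0 (lamBang 1 (app (app (var 1) (var 2)) (var 3)))))
/-- The (unevaluated) pair (a, b) ≡ cons a (cons b nil). -/
def pairE (a b : Term) : Term := app (app consT a) (app (app consT b) nilT)
/-- The evaluated form of (cons a b). -/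
def pairV (a b : Term) : Term := lamBang 0 (lamBang 1 (app (app (var 1) a) b))
/-- The evaluated pair value (a, b). -/
def mkPair (a b : Term) : Term := pairV a (pairV b nilT)

/-- The bit constants. -/
def bit : Bool → Term := fun b => const (if b then .one else .zero)

/-- Output of the Hadamard gate on a bit. -/
noncomputable def hadOut : Bool → (Term →₀ ℂ)
  | false => (Real.sqrt 2 : ℂ)⁻¹ • (Finsupp.single (bit false) 1 + Finsupp.single (bit true) 1)
  | true  => (Real.sqrt 2 : ℂ)⁻¹ • (Finsupp.single (bit false) 1 - Finsupp.single (bit true) 1)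

/-- Action of the primitive gate symbols on (encoded) bit values:
`GateApp g φ s` means U|φ⟩ = s for the unitary U named by g. -/
inductive GateApp : Const → Term → (Term →₀ ℂ) → Prop
  | had (b : Bool) : GateApp .hadamard (bit b) (hadOut b)
  | gX (b : Bool) : GateApp .gateX (bit b) (Finsupp.single (bit !b) 1)
  | gY (b : Bool) : GateApp .gateY (bit b)
      ((if b then -Complex.I else Complex.I) • Finsupp.single (bit !b) 1)
  | gZ (b : Bool) : GateApp .gateZ (bit b)
      ((if b then (-1 : ℂ) else 1) • Finsupp.single (bit b) 1)
  | gS (b : Bool) : GateApp .phaseS (bit b)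
      ((if b then Complex.I else 1) • Finsupp.single (bit b) 1)
  | gR (b : Bool) : GateApp .gateR (bit b)
      ((if b then Complex.exp (Complex.I * Real.pi / 4) else 1) • Finsupp.single (bit b) 1)
  | gCnot (a b : Bool) : GateApp .cnot (mkPair (bit a) (bit b))
      (Finsupp.single (mkPair (bit a) (bit (xor a b))) 1)

/-- One step of reduction of a term, producing a history entry and a
superposition of resulting terms (operational model of λ_q). -/
inductive SubStep : Term → Term → (Term →₀ ℂ) → Prop
  | app1 {t₁ h s} (t₂) : SubStep t₁ h s →
      SubStep (app t₁ t₂) (app h ph) (s.mapDomain fun u => app u t₂)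
  | app2 {v t₂ h s} : IsValue v → SubStep t₂ h s →
      SubStep (app v t₂) (app ph h) (s.mapDomain fun u => app v u)
  | beta {x E v} : IsValue v →
      SubStep (app (lam x E) v) (app (lam x (skel x E)) ph) (Finsupp.single (subst v x E) 1)
  | bangBeta1 {x E t'} : x ∈ freeVars E →
      SubStep (app (lamBang x E) (bang t')) (app (lamBang x (skel x E)) ph)
        (Finsupp.single (subst t' x E) 1)
  | bangBeta2 {x E t'} : x ∉ freeVars E →
      SubStep (app (lamBang x E) (bang t')) (app (lamBang x ph) (bang t')) (Finsupp.single E 1)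
  | gate {g φ s} : GateApp g φ s →
      SubStep (app (const g) φ) (app (const g) ph) s

/-- A configuration: history track followed by the computational register. -/
abbrev Config := List Term × Term

/-- A state: finitely supported complex linear combination of configurations. -/
abbrev QState := Config →₀ ℂ

/-- One step of the operational model on a single configuration, producing a state. -/
inductive ConfStep : Config → QState → Prop
  | sub {H t h s} : SubStep t h s →
      ConfStep (H, t) (s.mapDomain fun u => (H ++ [h], u))
  | idStep {H t} : (∀ h s, ¬ SubStep t h s) →
      ConfStep (H, t) (Finsupp.single (H ++ [ph], t) 1)

/-- One step of the operational model of λ_q, extended linearly to states. -/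
def StateStep (ψ ψ' : QState) : Prop :=
  ∃ F : Config → QState, (∀ c ∈ ψ.support, ConfStep c (F c)) ∧
    ψ' = ψ.sum fun c a => a • F c

/-- The register reduction rules of λ_q on a single term, producing a
superposition of terms. -/
inductive RegStep : Term → (Term →₀ ℂ) → Prop
  | app1 {t₁ s} (t₂) : RegStep t₁ s → RegStep (app t₁ t₂) (s.mapDomain fun u => app u t₂)
  | app2 {v t₂ s} : IsValue v → RegStep t₂ s → RegStep (app v t₂) (s.mapDomain fun u => app v u)
  | beta {x E v} : IsValue v → RegStep (app (lam x E) v) (Finsupp.single (subst v x E) 1)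
  | bangBeta {x E t'} : RegStep (app (lamBang x E) (bang t')) (Finsupp.single (subst t' x E) 1)
  | gate {g φ s} : GateApp g φ s → RegStep (app (const g) φ) s

/-- The register reduction rules extended linearly to superpositions of terms. -/
def RegStepS (c c' : Term →₀ ℂ) : Prop :=
  ∃ F : Term → (Term →₀ ℂ), (∀ t ∈ c.support, RegStep t (F t)) ∧
    c' = c.sum fun t a => a • F t

/-- Congruence of terms: they coincide symbol by symbol except possibly at
positions containing the constants 0 or 1. -/
inductive Congr : Term → Term → Prop
  | bit {c c'} : (c = .zero ∨ c = .one) → (c' = .zero ∨ c' = .one) →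
      Congr (const c) (const c')
  | var (x) : Congr (var x) (var x)
  | const (c) : Congr (const c) (const c)
  | lam {b b'} (x) : Congr b b' → Congr (lam x b) (lam x b')
  | lamBang {b b'} (x) : Congr b b' → Congr (lamBang x b) (lamBang x b')
  | app {a a' b b'} : Congr a a' → Congr b b' → Congr (app a b) (app a' b')
  | bang {t t'} : Congr t t' → Congr (bang t) (bang t')


/-- Configurations are congruent if their history tracks have the same length
with corresponding entries congruent, and their registers are congruent. -/
def ConfigCongr (c c' : Config) : Prop :=
  List.Forall₂ Congr c.1 c'.1 ∧ Congr c.2 c'.2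


theorem congr_refl : ∀ t, Congr t t
  | var x => .var x
  | lam x b => .lam x (congr_refl b)
  | app a b => .app (congr_refl a) (congr_refl b)
  | const c => .const c
  | bang t => .bang (congr_refl t)
  | lamBang x b => .lamBang x (congr_refl b)

theorem congr_symm {a b : Term} (h : Congr a b) : Congr b a := by
  induction h with
  | bit h1 h2 => exact .bit h2 h1
  | var x => exact .var x
  | const c => exact .const c
  | lam x _ ih => exact .lam x ih
  | lamBang x _ ih => exact .lamBang x ih
  | app _ _ iha ihb => exact .app iha ihb
  | bang _ ih => exact .bang ih

theorem freeVars_congr {a b : Term} (h : Congr a b) : freeVars a = freeVars b := by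
  induction h <;> simp [freeVars, *]

theorem allVars_congr {a b : Term} (h : Congr a b) : allVars a = allVars b := by
  induction h <;> simp [allVars, *]

theorem isValue_congr {a b : Term} (h : Congr a b) (hv : IsValue a) : IsValue b := by
  cases h <;> simp_all [IsValue]

theorem skel_congr (x : ℕ) {a b : Term} (h : Congr a b) : skel x a = skel x b := by
  induction h with
  | bit _ _ => rfl
  | var => rfl
  | const => rfl
  | lam y hc ih => simp only [skel, freeVars_congr hc, ih]
  | lamBang y hc ih => simp only [skel, freeVars_congr hc, ih]
  | app hc1 hc2 ih1 ih2 => simp only [skel, freeVars_congr hc1, freeVars_congr hc2, ih1, ih2]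
  | bang hc ih => simp only [skel, freeVars_congr hc, ih]

theorem rename_congr (y z : ℕ) {a b : Term} (h : Congr a b) :
    Congr (rename y z a) (rename y z b) := by
  induction h with
  | bit h1 h2 => exact .bit h1 h2
  | var x => simp only [rename]; split <;> exact congr_refl _
  | const c => exact .const c
  | lam x hc ih =>
    simp only [rename]
    split
    · exact .lam x hc
    · exact .lam x ih
  | lamBang x hc ih =>
    simp only [rename]
    split
    · exact .lamBang x hc
    · exact .lamBang x ih
  | app _ _ ih1 ih2 => exact .app ih1 ih2
  | bang _ ih => exact .bang ih

theorem subst_congr_aux : ∀ (n : ℕ) (x : ℕ) {v v' E E' : Term}, size E ≤ n →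
    Congr v v' → Congr E E' → Congr (subst v x E) (subst v' x E') := by
  intro n
  induction n with
  | zero => intro x v v' E E' hsz; cases E <;> simp [size] at hsz
  | succ n ih =>
    intro x v v' E E' hsz hv hE
    cases hE with
    | bit h1 h2 => simpa only [subst] using Congr.bit h1 h2
    | var y =>
      simp only [subst]; split
      · exact hv
      · exact .var y
    | const c => simpa only [subst] using Congr.const c
    | app ha hb =>
      simp only [size] at hsz
      simp only [subst]
      exact .app (ih x (by omega) hv ha) (ih x (by omega) hv hb)
    | bang hb =>
      simp only [size] at hsz
      simp only [subst]
      exact .bang (ih x (by omega) hv hb)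
    | lam y hb =>
      rename_i b b'
      simp only [size] at hsz
      have hfv := freeVars_congr hv
      have hfb := freeVars_congr hb
      have hab := allVars_congr hb
      simp only [subst, ← hfv, ← hfb, ← hab]
      split
      · exact .lam y hb
      · split
        · exact .lam _ (ih x (by rw [size_rename]; omega) hv (rename_congr _ _ hb))
        · exact .lam y (ih x (by omega) hv hb)
    | lamBang y hb =>
      rename_i b b'
      simp only [size] at hsz
      have hfv := freeVars_congr hv
      have hfb := freeVars_congr hb
      have hab := allVars_congr hb
      simp only [subst, ← hfv, ← hfb, ← hab]
      split
      · exact .lamBang y hb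
      · split
        · exact .lamBang _ (ih x (by rw [size_rename]; omega) hv (rename_congr _ _ hb))
        · exact .lamBang y (ih x (by omega) hv hb)

theorem subst_congr (x : ℕ) {v v' E E' : Term} (hv : Congr v v') (hE : Congr E E') :
    Congr (subst v x E) (subst v' x E') :=
  subst_congr_aux (size E) x le_rfl hv hE

theorem bit_or {c : Const} (h : c = .zero ∨ c = .one) : ∃ b', const c = bit b' := by
  rcases h with rfl | rfl
  · exact ⟨false, rfl⟩
  · exact ⟨true, rfl⟩

theorem congr_bit {b : Bool} {t : Term} (h : Congr (bit b) t) : ∃ b', t = bit b' := by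
  have hb : ∃ c, bit b = const c ∧ (c = .zero ∨ c = .one) := by
    cases b
    · exact ⟨.zero, rfl, Or.inl rfl⟩
    · exact ⟨.one, rfl, Or.inr rfl⟩
  obtain ⟨c, hc, hzo⟩ := hb
  rw [hc] at h
  cases h with
  | bit h1 h2 => exact bit_or h2
  | const => exact bit_or hzo

theorem congr_bits (b b' : Bool) : Congr (bit b) (bit b') := by
  cases b <;> cases b' <;> exact Congr.bit (by simp [bit]) (by simp [bit])

theorem congr_nil {t : Term} (h : Congr nilT t) : t = nilT := by
  simp only [nilT, idT] at h ⊢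
  cases h with
  | lamBang _ h =>
    cases h with
    | lamBang _ h =>
      cases h with
      | app h1 h2 =>
        cases h1
        cases h2 with
        | lam _ h => cases h; rfl

theorem congr_mkPair {a b : Bool} {t : Term}
    (h : Congr (mkPair (bit a) (bit b)) t) : ∃ a' b', t = mkPair (bit a') (bit b') := by
  simp only [mkPair, pairV] at h ⊢
  cases h with
  | lamBang _ h =>
    cases h with
    | lamBang _ h =>
      cases h with
      | app h1 h2 =>
        cases h1 with
        | app hv ha =>
          cases hv
          obtain ⟨a', rfl⟩ := congr_bit ha
          cases h2 with
          | lamBang _ h =>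
            cases h with
            | lamBang _ h =>
              cases h with
              | app h1 h2 =>
                cases h1 with
                | app hv hb =>
                  cases hv
                  obtain ⟨b', rfl⟩ := congr_bit hb
                  exact ⟨a', b', by rw [congr_nil h2]⟩

theorem congr_mkPair_bits (a b a' b' : Bool) :
    Congr (mkPair (bit a) (bit b)) (mkPair (bit a') (bit b')) :=
  .lamBang 0 (.lamBang 1 (.app (.app (.var 1) (congr_bits a a'))
    (.lamBang 0 (.lamBang 1 (.app (.app (.var 1) (congr_bits b b')) (congr_refl nilT))))))

theorem gate_not_bit {g : Const} {φ : Term} {s : Term →₀ ℂ} (h : GateApp g φ s) :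
    ¬ (g = .zero ∨ g = .one) := by
  cases h <;> simp

theorem hadOut_support (b : Bool) : (hadOut b).support ⊆ {bit false, bit true} := by
  cases b <;> simp only [hadOut]
  · exact Finsupp.support_smul.trans <| Finsupp.support_add.trans <|
      Finset.union_subset (Finsupp.support_single_subset.trans (by simp))
        (Finsupp.support_single_subset.trans (by simp))
  · exact Finsupp.support_smul.trans <| Finsupp.support_sub.trans <|
      Finset.union_subset (Finsupp.support_single_subset.trans (by simp))
        (Finsupp.support_single_subset.trans (by simp))

theorem gate_shape {g : Const} {φ : Term} {s : Term →₀ ℂ} (h : GateApp g φ s) :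
    (g ≠ .cnot ∧ ∀ u ∈ s.support, ∃ b, u = bit b) ∨
    (g = .cnot ∧ ∀ u ∈ s.support, ∃ a b, u = mkPair (bit a) (bit b)) := by
  cases h with
  | had b =>
    refine Or.inl ⟨by simp, fun u hu => ?_⟩
    have := hadOut_support b hu
    simp only [Finset.mem_insert, Finset.mem_singleton] at this
    rcases this with h | h
    · exact ⟨false, h⟩
    · exact ⟨true, h⟩
  | gX b =>
    exact Or.inl ⟨by simp, fun u hu => ⟨!b, by
      have := Finsupp.support_single_subset hu; simpa using this⟩⟩
  | gY b =>
    exact Or.inl ⟨by simp, fun u hu => ⟨!b, by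
      have := Finsupp.support_single_subset (Finsupp.support_smul hu); simpa using this⟩⟩
  | gZ b =>
    exact Or.inl ⟨by simp, fun u hu => ⟨b, by
      have := Finsupp.support_single_subset (Finsupp.support_smul hu); simpa using this⟩⟩
  | gS b =>
    exact Or.inl ⟨by simp, fun u hu => ⟨b, by
      have := Finsupp.support_single_subset (Finsupp.support_smul hu); simpa using this⟩⟩
  | gR b =>
    exact Or.inl ⟨by simp, fun u hu => ⟨b, by
      have := Finsupp.support_single_subset (Finsupp.support_smul hu); simpa using this⟩⟩
  | gCnot a b =>
    exact Or.inr ⟨rfl, fun u hu => ⟨a, xor a b, by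
      have := Finsupp.support_single_subset hu; simpa using this⟩⟩

theorem gate_pair {g : Const} {φ φ' : Term} {s s' : Term →₀ ℂ}
    (h : GateApp g φ s) (h' : GateApp g φ' s') :
    ∀ u ∈ s.support, ∀ u' ∈ s'.support, Congr u u' := by
  intro u hu u' hu'
  rcases gate_shape h with ⟨hg, hs⟩ | ⟨hg, hs⟩ <;>
    rcases gate_shape h' with ⟨hg', hs'⟩ | ⟨hg', hs'⟩
  · obtain ⟨b, rfl⟩ := hs u hu
    obtain ⟨b', rfl⟩ := hs' u' hu'
    exact congr_bits b b'
  · exact absurd hg' hg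
  · exact absurd hg hg'
  · obtain ⟨a, b, rfl⟩ := hs u hu
    obtain ⟨a', b', rfl⟩ := hs' u' hu'
    exact congr_mkPair_bits a b a' b'

theorem gateApp_exists {g : Const} {φ φ' : Term} {s : Term →₀ ℂ}
    (h : GateApp g φ s) (hc : Congr φ φ') : ∃ s', GateApp g φ' s' := by
  cases h with
  | had b => obtain ⟨b', rfl⟩ := congr_bit hc; exact ⟨_, .had b'⟩
  | gX b => obtain ⟨b', rfl⟩ := congr_bit hc; exact ⟨_, .gX b'⟩
  | gY b => obtain ⟨b', rfl⟩ := congr_bit hc; exact ⟨_, .gY b'⟩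
  | gZ b => obtain ⟨b', rfl⟩ := congr_bit hc; exact ⟨_, .gZ b'⟩
  | gS b => obtain ⟨b', rfl⟩ := congr_bit hc; exact ⟨_, .gS b'⟩
  | gR b => obtain ⟨b', rfl⟩ := congr_bit hc; exact ⟨_, .gR b'⟩
  | gCnot a b => obtain ⟨a', b', rfl⟩ := congr_mkPair hc; exact ⟨_, .gCnot a' b'⟩

theorem substep_is_app {t h : Term} {s : Term →₀ ℂ} (hs : SubStep t h s) :
    ∃ a b, t = app a b := by
  cases hs <;> exact ⟨_, _, rfl⟩

theorem value_no_substep {t h : Term} {s : Term →₀ ℂ} (hv : IsValue t)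
    (hs : SubStep t h s) : False := by
  obtain ⟨a, b, rfl⟩ := substep_is_app hs
  simp [IsValue] at hv

theorem substep_ex {t t' h : Term} {s : Term →₀ ℂ} (hc : Congr t t') (hs : SubStep t h s) :
    ∃ h' s', SubStep t' h' s' := by
  induction hs generalizing t' with
  | app1 t₂ _ ih =>
    cases hc with
    | app h1 h2 =>
      obtain ⟨h', s', hstep⟩ := ih h1
      exact ⟨_, _, .app1 _ hstep⟩
  | app2 hv _ ih =>
    cases hc with
    | app h1 h2 =>
      obtain ⟨h', s', hstep⟩ := ih h2
      exact ⟨_, _, .app2 (isValue_congr h1 hv) hstep⟩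
  | beta hv =>
    cases hc with
    | app h1 h2 =>
      cases h1 with
      | lam x hb => exact ⟨_, _, .beta (isValue_congr h2 hv)⟩
  | bangBeta1 hx =>
    cases hc with
    | app h1 h2 =>
      cases h1 with
      | lamBang x hb =>
        cases h2 with
        | bang ht => exact ⟨_, _, .bangBeta1 (by rw [← freeVars_congr hb]; exact hx)⟩
  | bangBeta2 hx =>
    cases hc with
    | app h1 h2 =>
      cases h1 with
      | lamBang x hb =>
        cases h2 with
        | bang ht => exact ⟨_, _, .bangBeta2 (by rw [← freeVars_congr hb]; exact hx)⟩
  | gate hg =>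
    cases hc with
    | app h1 h2 =>
      cases h1 with
      | bit hz _ => exact absurd (Or.imp id id hz) (gate_not_bit hg)
      | const =>
        obtain ⟨s', hs'⟩ := gateApp_exists hg h2
        exact ⟨_, _, .gate hs'⟩

theorem mem_mapDomain {f : Term → Term} {s : Term →₀ ℂ} {u : Term}
    (hu : u ∈ (s.mapDomain f).support) : ∃ w ∈ s.support, u = f w := by
  have := Finsupp.mapDomain_support hu
  simp only [Finset.mem_image] at this
  obtain ⟨w, hw, rfl⟩ := this
  exact ⟨w, hw, rfl⟩

theorem substep_pair {t t' h h' : Term} {s s' : Term →₀ ℂ}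
    (hc : Congr t t') (h1 : SubStep t h s) (h2 : SubStep t' h' s') :
    Congr h h' ∧ ∀ u ∈ s.support, ∀ u' ∈ s'.support, Congr u u' := by
  induction h1 generalizing t' h' s' with
  | app1 t₂ hs1 ih =>
    cases hc with
    | app hc1 hc2 =>
      cases h2 with
      | app1 t₂' hs1' =>
        obtain ⟨hh, hreg⟩ := ih hc1 hs1'
        refine ⟨.app hh (congr_refl ph), fun u hu u' hu' => ?_⟩
        obtain ⟨w, hw, rfl⟩ := mem_mapDomain hu
        obtain ⟨w', hw', rfl⟩ := mem_mapDomain hu'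
        exact .app (hreg w hw w' hw') hc2
      | app2 hv' hs2' =>
        obtain ⟨a, b, rfl⟩ := substep_is_app hs1
        cases hc1 <;> simp [IsValue] at hv'
      | beta hv' =>
        obtain ⟨a, b, rfl⟩ := substep_is_app hs1
        cases hc1
      | bangBeta1 _ =>
        obtain ⟨a, b, rfl⟩ := substep_is_app hs1
        cases hc1
      | bangBeta2 _ =>
        obtain ⟨a, b, rfl⟩ := substep_is_app hs1
        cases hc1
      | gate _ =>
        obtain ⟨a, b, rfl⟩ := substep_is_app hs1
        cases hc1
  | app2 hv hs2 ih =>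
    cases hc with
    | app hc1 hc2 =>
      cases h2 with
      | app1 t₂' hs1' => exact absurd hs1' (fun hs => value_no_substep (isValue_congr hc1 hv) hs)
      | app2 hv' hs2' =>
        obtain ⟨hh, hreg⟩ := ih hc2 hs2'
        refine ⟨.app (congr_refl ph) hh, fun u hu u' hu' => ?_⟩
        obtain ⟨w, hw, rfl⟩ := mem_mapDomain hu
        obtain ⟨w', hw', rfl⟩ := mem_mapDomain hu'
        exact .app hc1 (hreg w hw w' hw')
      | beta hv' => exact absurd hs2 (fun hs => value_no_substep (isValue_congr (congr_symm hc2) hv') hs)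
      | bangBeta1 _ =>
        obtain ⟨a, b, rfl⟩ := substep_is_app hs2
        cases hc2
      | bangBeta2 _ =>
        obtain ⟨a, b, rfl⟩ := substep_is_app hs2
        cases hc2
      | gate hg' =>
        obtain ⟨a, b, rfl⟩ := substep_is_app hs2
        cases hg' <;> cases hc2
  | beta hv =>
    rename_i x E v
    cases hc with
    | app hc1 hc2 =>
      cases hc1 with
      | lam _ hb =>
        cases h2 with
        | app1 _ hs1' => exact absurd hs1' (fun hs => value_no_substep (by exact trivial) hs)
        | app2 _ hs2' => exact absurd hs2' (fun hs => value_no_substep (isValue_congr hc2 hv) hs)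
        | beta hv' =>
          refine ⟨.app (.lam x (by rw [skel_congr x hb]; exact congr_refl _)) (congr_refl ph),
            fun u hu u' hu' => ?_⟩
          have h1 := Finsupp.support_single_subset hu
          have h2 := Finsupp.support_single_subset hu'
          simp only [Finset.mem_singleton] at h1 h2
          subst h1; subst h2
          exact subst_congr x hc2 hb
  | bangBeta1 hx =>
    rename_i x E t''
    cases hc with
    | app hc1 hc2 =>
      cases hc1 with
      | lamBang _ hb =>
        cases hc2 with
        | bang hct =>
          cases h2 with
          | app1 _ hs1' => exact absurd hs1' (fun hs => value_no_substep (by exact trivial) hs)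
          | app2 _ hs2' => exact absurd hs2' (fun hs => value_no_substep (by exact trivial) hs)
          | bangBeta1 hx' =>
            refine ⟨.app (.lamBang x (by rw [skel_congr x hb]; exact congr_refl _)) (congr_refl ph),
              fun u hu u' hu' => ?_⟩
            have h1 := Finsupp.support_single_subset hu
            have h2 := Finsupp.support_single_subset hu'
            simp only [Finset.mem_singleton] at h1 h2
            subst h1; subst h2
            exact subst_congr x hct hb
          | bangBeta2 hx' => exact absurd (freeVars_congr hb ▸ hx) hx'
  | bangBeta2 hx =>
    rename_i x E t''
    cases hc with
    | app hc1 hc2 =>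
      cases hc1 with
      | lamBang _ hb =>
        cases hc2 with
        | bang hct =>
          cases h2 with
          | app1 _ hs1' => exact absurd hs1' (fun hs => value_no_substep (by exact trivial) hs)
          | app2 _ hs2' => exact absurd hs2' (fun hs => value_no_substep (by exact trivial) hs)
          | bangBeta1 hx' => exact absurd ((freeVars_congr hb).symm ▸ hx') hx
          | bangBeta2 hx' =>
            refine ⟨.app (.lamBang x (congr_refl ph)) (.bang hct), fun u hu u' hu' => ?_⟩
            have h1 := Finsupp.support_single_subset hu
            have h2 := Finsupp.support_single_subset hu'
            simp only [Finset.mem_singleton] at h1 h2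
            subst h1; subst h2
            exact hb
  | gate hg =>
    cases hc with
    | app hc1 hc2 =>
      cases hc1 with
      | bit hz _ => exact absurd (Or.imp id id hz) (gate_not_bit hg)
      | const =>
        cases h2 with
        | app1 _ hs1' => exact absurd hs1' (fun hs => value_no_substep (by exact trivial) hs)
        | app2 _ hs2' =>
          obtain ⟨a, b, rfl⟩ := substep_is_app hs2'
          cases hg <;> cases hc2
        | gate hg' =>
          exact ⟨.app (congr_refl _) (congr_refl ph), gate_pair hg hg'⟩

theorem confstep_pair {c c' : Config} {σ σ' : QState}
    (hc : ConfigCongr c c') (h1 : ConfStep c σ) (h2 : ConfStep c' σ') :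
    ∀ d ∈ σ.support, ∀ d' ∈ σ'.support, ConfigCongr d d' := by
  obtain ⟨hH, ht⟩ := hc
  intro d hd d' hd'
  cases h1 with
  | sub hs1 =>
    cases h2 with
    | sub hs2 =>
      obtain ⟨hh, hreg⟩ := substep_pair ht hs1 hs2
      have hd2 := Finsupp.mapDomain_support hd
      have hd'2 := Finsupp.mapDomain_support hd'
      simp only [Finset.mem_image] at hd2 hd'2
      obtain ⟨w, hw, rfl⟩ := hd2
      obtain ⟨w', hw', rfl⟩ := hd'2
      exact ⟨List.rel_append hH (List.Forall₂.cons hh List.Forall₂.nil), hreg w hw w' hw'⟩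
    | idStep hno =>
      obtain ⟨h', s', hs'⟩ := substep_ex ht hs1
      exact absurd hs' (hno _ _)
  | idStep hno =>
    cases h2 with
    | sub hs2 =>
      obtain ⟨h', s', hs'⟩ := substep_ex (congr_symm ht) hs2
      exact absurd hs' (hno _ _)
    | idStep hno' =>
      have h1 := Finsupp.support_single_subset hd
      have h2 := Finsupp.support_single_subset hd'
      simp only [Finset.mem_singleton] at h1 h2
      subst h1; subst h2
      exact ⟨List.rel_append hH (List.Forall₂.cons (congr_refl ph) List.Forall₂.nil), ht⟩

def Inv (ψ : QState) : Prop := ∀ c ∈ ψ.support, ∀ c' ∈ ψ.support, ConfigCongr c c'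

theorem inv_step {ψ ψ' : QState} (hinv : Inv ψ) (hs : StateStep ψ ψ') : Inv ψ' := by
  obtain ⟨F, hF, rfl⟩ := hs
  intro c hc c' hc'
  have hc2 := Finsupp.support_sum hc
  have hc'2 := Finsupp.support_sum hc'
  simp only [Finset.mem_biUnion] at hc2 hc'2
  obtain ⟨d, hd, hcd⟩ := hc2
  obtain ⟨d', hd', hcd'⟩ := hc'2
  have hcd := Finsupp.support_smul hcd
  have hcd' := Finsupp.support_smul hcd'
  exact confstep_pair (hinv d hd d' hd') (hF d hd) (hF d' hd') c hcd c' hcd'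

/-- Any two configurations in the support of a state reachable
from an initial basis configuration |H;t⟩ by steps of the operational model of
λ_q are congruent. -/
theorem congruent_of_reachable (H : List Term) (t : Term) (ψ : QState)
    (hreach : Relation.ReflTransGen StateStep (Finsupp.single (H, t) (1 : ℂ)) ψ) :
    ∀ c ∈ ψ.support, ∀ c' ∈ ψ.support, ConfigCongr c c' := by
  have : Inv ψ := by
    induction hreach with
    | refl =>
      intro c hc c' hc'
      have h1 := Finsupp.support_single_subset hc
      have h2 := Finsupp.support_single_subset hc'
      simp only [Finset.mem_singleton] at h1 h2
      subst h1; subst h2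
      exact ⟨List.forall₂_same.mpr fun x _ => congr_refl x, congr_refl t⟩
    | tail _ hstep ih => exact inv_step ih hstep
  exact this

end LambdaQ
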